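/- Okada's property for the syntactic BI algebra: interpreting atoms by [[a]] = ⟦a⟧ in the BI algebra C of closed sets of bunches, every formula φ satisfies φ ∈ [[φ]] ⊆ ⟦φ⟧, where the leftmost φ is the single-leaf bunch. -/
import Mathlib


/-- Formulas of BI. -/
inductive Frml : Type
  | atom : Nat → Frml
  | top : Frml
  | bot : Frml
  | emp : Frml
  | and : Frml → Frml → Frml
  | or : Frml → Frml → Frml
  | imp : Frml → Frml → Frml
  | sep : Frml → Frml → Frml
  | wand : Frml → Frml → Frml

/-- Bunches: trees with formula leaves, multiplicative/additive units and nodes. -/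
inductive Bunch : Type
  | frml : Frml → Bunch
  | mempty : Bunch    -- ∅ₘ
  | aempty : Bunch    -- ∅ₐ
  | comma : Bunch → Bunch → Bunch   -- multiplicative ','
  | semic : Bunch → Bunch → Bunch   -- additive ';'

/-- Bunched contexts: bunches with a single hole. -/
inductive BCtx : Type
  | hole : BCtx
  | commaL : BCtx → Bunch → BCtx
  | commaR : Bunch → BCtx → BCtx
  | semicL : BCtx → Bunch → BCtx
  | semicR : Bunch → BCtx → BCtx

/-- Filling the hole of a bunched context with a bunch. -/
def BCtx.fill : BCtx → Bunch → Bunch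
  | .hole, Δ => Δ
  | .commaL C Γ, Δ => .comma (C.fill Δ) Γ
  | .commaR Γ C, Δ => .comma Γ (C.fill Δ)
  | .semicL C Γ, Δ => .semic (C.fill Δ) Γ
  | .semicR Γ C, Δ => .semic Γ (C.fill Δ)

/-- Equivalence of bunches: commutative-monoid laws for (',', ∅ₘ) and (';', ∅ₐ),
under arbitrary bunched contexts. -/
inductive BEquiv : Bunch → Bunch → Prop
  | refl (Δ : Bunch) : BEquiv Δ Δ
  | symm {Δ Δ' : Bunch} : BEquiv Δ Δ' → BEquiv Δ' Δ
  | trans {Δ₁ Δ₂ Δ₃ : Bunch} : BEquiv Δ₁ Δ₂ → BEquiv Δ₂ Δ₃ → BEquiv Δ₁ Δ₃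
  | commaComm (Δ₁ Δ₂ : Bunch) : BEquiv (.comma Δ₁ Δ₂) (.comma Δ₂ Δ₁)
  | semicComm (Δ₁ Δ₂ : Bunch) : BEquiv (.semic Δ₁ Δ₂) (.semic Δ₂ Δ₁)
  | commaAssoc (Δ₁ Δ₂ Δ₃ : Bunch) :
      BEquiv (.comma Δ₁ (.comma Δ₂ Δ₃)) (.comma (.comma Δ₁ Δ₂) Δ₃)
  | semicAssoc (Δ₁ Δ₂ Δ₃ : Bunch) :
      BEquiv (.semic Δ₁ (.semic Δ₂ Δ₃)) (.semic (.semic Δ₁ Δ₂) Δ₃)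
  | commaUnit (Δ : Bunch) : BEquiv (.comma Δ .mempty) Δ
  | semicUnit (Δ : Bunch) : BEquiv (.semic Δ .aempty) Δ
  | ctx (C : BCtx) {Δ Δ' : Bunch} : BEquiv Δ Δ' → BEquiv (C.fill Δ) (C.fill Δ')

/-- Cut-free sequent calculus for BI, with the axiom rule restricted to atoms. -/
inductive Proves : Bunch → Frml → Prop
  | ax (a : Nat) : Proves (.frml (.atom a)) (.atom a)
  | equiv {Δ Δ' : Bunch} {φ : Frml} :
      Proves Δ' φ → BEquiv Δ Δ' → Proves Δ φ
  | weaken (C : BCtx) {Δ₁ Δ₂ : Bunch} {φ : Frml} :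
      Proves (C.fill Δ₁) φ → Proves (C.fill (.semic Δ₁ Δ₂)) φ
  | contract (C : BCtx) {Δ₁ : Bunch} {φ : Frml} :
      Proves (C.fill (.semic Δ₁ Δ₁)) φ → Proves (C.fill Δ₁) φ
  | empR : Proves .mempty .emp
  | empL (C : BCtx) {φ : Frml} :
      Proves (C.fill .mempty) φ → Proves (C.fill (.frml .emp)) φ
  | sepR {Δ₁ Δ₂ : Bunch} {φ ψ : Frml} :
      Proves Δ₁ φ → Proves Δ₂ ψ → Proves (.comma Δ₁ Δ₂) (.sep φ ψ)
  | sepL (C : BCtx) {φ ψ χ : Frml} :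
      Proves (C.fill (.comma (.frml φ) (.frml ψ))) χ →
      Proves (C.fill (.frml (.sep φ ψ))) χ
  | wandR {Δ : Bunch} {φ ψ : Frml} :
      Proves (.comma Δ (.frml φ)) ψ → Proves Δ (.wand φ ψ)
  | wandL (C : BCtx) {Δ₁ Δ₂ : Bunch} {φ ψ χ : Frml} :
      Proves Δ₁ φ → Proves (C.fill (.comma Δ₂ (.frml ψ))) χ →
      Proves (C.fill (.comma (.comma Δ₁ Δ₂) (.frml (.wand φ ψ)))) χ
  | topR : Proves .aempty .top
  | topL (C : BCtx) {φ : Frml} :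
      Proves (C.fill .aempty) φ → Proves (C.fill (.frml .top)) φ
  | andR {Δ₁ Δ₂ : Bunch} {φ ψ : Frml} :
      Proves Δ₁ φ → Proves Δ₂ ψ → Proves (.semic Δ₁ Δ₂) (.and φ ψ)
  | andL (C : BCtx) {φ ψ χ : Frml} :
      Proves (C.fill (.semic (.frml φ) (.frml ψ))) χ →
      Proves (C.fill (.frml (.and φ ψ))) χ
  | impR {Δ : Bunch} {φ ψ : Frml} :
      Proves (.semic Δ (.frml φ)) ψ → Proves Δ (.imp φ ψ)
  | impL (C : BCtx) {Δ₁ Δ₂ : Bunch} {φ ψ χ : Frml} :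
      Proves Δ₁ φ → Proves (C.fill (.semic Δ₂ (.frml ψ))) χ →
      Proves (C.fill (.semic (.semic Δ₁ Δ₂) (.frml (.imp φ ψ)))) χ
  | botL (C : BCtx) {φ : Frml} : Proves (C.fill (.frml .bot)) φ
  | orR1 {Δ : Bunch} {φ ψ : Frml} : Proves Δ φ → Proves Δ (.or φ ψ)
  | orR2 {Δ : Bunch} {φ ψ : Frml} : Proves Δ ψ → Proves Δ (.or φ ψ)
  | orL (C : BCtx) {φ ψ χ : Frml} :
      Proves (C.fill (.frml φ)) χ → Proves (C.fill (.frml ψ)) χ →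
      Proves (C.fill (.frml (.or φ ψ))) χ

/-- The formula collapse `⟨Δ⟩` of a bunch. -/
def Bunch.collapse : Bunch → Frml
  | .frml φ => φ
  | .mempty => .emp
  | .aempty => .top
  | .comma Δ₁ Δ₂ => .sep Δ₁.collapse Δ₂.collapse
  | .semic Δ₁ Δ₂ => .and Δ₁.collapse Δ₂.collapse

/-- The principal closed set `⟦φ⟧ = {Δ | Δ ⊢cf φ}`. -/
def pr (φ : Frml) : Set Bunch := {Δ | Proves Δ φ}

/-- The Moore closure generated by the principal sets:
`cl X = ⋂ {⟦φ⟧ | X ⊆ ⟦φ⟧}`. -/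
def clB (X : Set Bunch) : Set Bunch := ⋂₀ {Y | ∃ φ : Frml, Y = pr φ ∧ X ⊆ Y}

/-- A set of bunches is closed if it is a fixpoint of the closure operator. -/
def ClosedB (X : Set Bunch) : Prop := clB X = X

/-- Interpretation of formulas in the syntactic BI algebra `C` of closed sets of
bunches, with atoms interpreted by `[[a]] = ⟦a⟧`. -/
def semC : Frml → Set Bunch
  | .atom a => pr (.atom a)
  | .top => Set.univ
  | .bot => clB ∅
  | .emp => clB {Bunch.mempty}
  | .and φ ψ => semC φ ∩ semC ψ
  | .or φ ψ => clB (semC φ ∪ semC ψ)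
  | .imp φ ψ => {Δ | ∀ Δ' ∈ semC φ, Bunch.semic Δ Δ' ∈ semC ψ}
  | .sep φ ψ => clB {b | ∃ Δ ∈ semC φ, ∃ Δ' ∈ semC ψ, b = Bunch.comma Δ Δ'}
  | .wand φ ψ => {Δ | ∀ Δ' ∈ semC φ, Bunch.comma Δ Δ' ∈ semC ψ}

/-! ### Auxiliary machinery for Okada's property -/

lemma mem_clB {X : Set Bunch} {Δ : Bunch} :
    Δ ∈ clB X ↔ ∀ φ : Frml, X ⊆ pr φ → Proves Δ φ := by
  constructor
  · intro h φ hX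
    exact h (pr φ) ⟨φ, rfl, hX⟩
  · rintro h Y ⟨φ, rfl, hX⟩
    exact h φ hX

lemma subset_clB {X : Set Bunch} : X ⊆ clB X :=
  fun _ h => mem_clB.2 fun _ hX => hX h

lemma clB_min {X : Set Bunch} {φ : Frml} (h : X ⊆ pr φ) : clB X ⊆ pr φ :=
  fun _ hΔ => mem_clB.1 hΔ φ h

/-- Closure of a set of bunches under the structural and (relevant) left rules,
applied in arbitrary bunched contexts. -/
structure ProofClosed (X : Set Bunch) : Prop where
  equiv : ∀ {Δ Δ' : Bunch}, BEquiv Δ Δ' → Δ' ∈ X → Δ ∈ X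
  weaken : ∀ (C : BCtx) {Δ₁ Δ₂ : Bunch}, C.fill Δ₁ ∈ X →
    C.fill (.semic Δ₁ Δ₂) ∈ X
  andL : ∀ (C : BCtx) {φ ψ : Frml},
    C.fill (.semic (.frml φ) (.frml ψ)) ∈ X → C.fill (.frml (.and φ ψ)) ∈ X
  impL : ∀ (C : BCtx) {Δ₁ Δ₂ : Bunch} {φ ψ : Frml}, Proves Δ₁ φ →
    C.fill (.semic Δ₂ (.frml ψ)) ∈ X →
    C.fill (.semic (.semic Δ₁ Δ₂) (.frml (.imp φ ψ))) ∈ X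
  wandL : ∀ (C : BCtx) {Δ₁ Δ₂ : Bunch} {φ ψ : Frml}, Proves Δ₁ φ →
    C.fill (.comma Δ₂ (.frml ψ)) ∈ X →
    C.fill (.comma (.comma Δ₁ Δ₂) (.frml (.wand φ ψ))) ∈ X

lemma pc_pr (χ : Frml) : ProofClosed (pr χ) where
  equiv {_ _} e h := Proves.equiv h e
  weaken C _ _ h := Proves.weaken C h
  andL C _ _ h := Proves.andL C h
  impL C _ _ _ _ h1 h2 := Proves.impL C h1 h2
  wandL C _ _ _ _ h1 h2 := Proves.wandL C h1 h2

lemma pc_univ : ProofClosed (Set.univ : Set Bunch) := by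
  constructor <;> intros <;> trivial

lemma pc_clB (X : Set Bunch) : ProofClosed (clB X) where
  equiv {_ _} e h := mem_clB.2 fun φ hX => (pc_pr φ).equiv e (mem_clB.1 h φ hX)
  weaken C _ _ h := mem_clB.2 fun φ hX => (pc_pr φ).weaken C (mem_clB.1 h φ hX)
  andL C _ _ h := mem_clB.2 fun φ hX => (pc_pr φ).andL C (mem_clB.1 h φ hX)
  impL C _ _ _ _ h1 h2 := mem_clB.2 fun φ hX => (pc_pr φ).impL C h1 (mem_clB.1 h2 φ hX)
  wandL C _ _ _ _ h1 h2 := mem_clB.2 fun φ hX => (pc_pr φ).wandL C h1 (mem_clB.1 h2 φ hX)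

lemma pc_inter {X Y : Set Bunch} (hX : ProofClosed X) (hY : ProofClosed Y) :
    ProofClosed (X ∩ Y) where
  equiv {_ _} e h := ⟨hX.equiv e h.1, hY.equiv e h.2⟩
  weaken C _ _ h := ⟨hX.weaken C h.1, hY.weaken C h.2⟩
  andL C _ _ h := ⟨hX.andL C h.1, hY.andL C h.2⟩
  impL C _ _ _ _ h1 h2 := ⟨hX.impL C h1 h2.1, hY.impL C h1 h2.2⟩
  wandL C _ _ _ _ h1 h2 := ⟨hX.wandL C h1 h2.1, hY.wandL C h1 h2.2⟩

lemma pc_impSet {Y Z : Set Bunch} (hZ : ProofClosed Z) :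
    ProofClosed {Δ | ∀ Δ' ∈ Y, Bunch.semic Δ Δ' ∈ Z} where
  equiv {_ _} e h Δ' hΔ' := hZ.equiv (BEquiv.ctx (.semicL .hole Δ') e) (h Δ' hΔ')
  weaken C _ _ h Δ' hΔ' := hZ.weaken (.semicL C Δ') (h Δ' hΔ')
  andL C _ _ h Δ' hΔ' := hZ.andL (.semicL C Δ') (h Δ' hΔ')
  impL C _ _ _ _ h1 h2 Δ' hΔ' := hZ.impL (.semicL C Δ') h1 (h2 Δ' hΔ')
  wandL C _ _ _ _ h1 h2 Δ' hΔ' := hZ.wandL (.semicL C Δ') h1 (h2 Δ' hΔ')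

lemma pc_wandSet {Y Z : Set Bunch} (hZ : ProofClosed Z) :
    ProofClosed {Δ | ∀ Δ' ∈ Y, Bunch.comma Δ Δ' ∈ Z} where
  equiv {_ _} e h Δ' hΔ' := hZ.equiv (BEquiv.ctx (.commaL .hole Δ') e) (h Δ' hΔ')
  weaken C _ _ h Δ' hΔ' := hZ.weaken (.commaL C Δ') (h Δ' hΔ')
  andL C _ _ h Δ' hΔ' := hZ.andL (.commaL C Δ') (h Δ' hΔ')
  impL C _ _ _ _ h1 h2 Δ' hΔ' := hZ.impL (.commaL C Δ') h1 (h2 Δ' hΔ')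
  wandL C _ _ _ _ h1 h2 Δ' hΔ' := hZ.wandL (.commaL C Δ') h1 (h2 Δ' hΔ')

lemma semC_proofClosed (φ : Frml) : ProofClosed (semC φ) := by
  induction φ with
  | atom a => exact pc_pr _
  | top => exact pc_univ
  | bot => exact pc_clB _
  | emp => exact pc_clB _
  | and φ ψ ihφ ihψ => exact pc_inter ihφ ihψ
  | or φ ψ ihφ ihψ => exact pc_clB _
  | imp φ ψ ihφ ihψ => exact pc_impSet ihψ
  | sep φ ψ ihφ ihψ => exact pc_clB _
  | wand φ ψ ihφ ihψ => exact pc_wandSet ihψ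

lemma proves_top (Δ : Bunch) : Proves Δ .top :=
  Proves.equiv (Proves.weaken .hole Proves.topR)
    (BEquiv.symm (BEquiv.trans (BEquiv.semicComm _ _) (BEquiv.semicUnit Δ)))

/-- Okada's property: every formula `φ` satisfies
`φ ∈ [[φ]] ⊆ ⟦φ⟧`. -/
theorem okada_property (φ : Frml) :
    Bunch.frml φ ∈ semC φ ∧ semC φ ⊆ pr φ := by
  induction φ with
  | atom a =>
    exact ⟨Proves.ax a, fun _ h => h⟩
  | top =>
    exact ⟨trivial, fun Δ _ => proves_top Δ⟩
  | bot =>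
    refine ⟨mem_clB.2 fun χ _ => Proves.botL .hole, clB_min ?_⟩
    intro Δ h
    exact absurd h (Set.notMem_empty Δ)
  | emp =>
    refine ⟨mem_clB.2 fun χ h => Proves.empL .hole (h rfl), clB_min ?_⟩
    rintro Δ rfl
    exact Proves.empR
  | and φ ψ ihφ ihψ =>
    obtain ⟨hφm, hφs⟩ := ihφ
    obtain ⟨hψm, hψs⟩ := ihψ
    constructor
    · constructor
      · exact (semC_proofClosed φ).andL .hole
          ((semC_proofClosed φ).weaken .hole hφm)
      · exact (semC_proofClosed ψ).andL .hole
          ((semC_proofClosed ψ).equiv (BEquiv.semicComm _ _)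
            ((semC_proofClosed ψ).weaken .hole hψm))
    · intro Δ hΔ
      exact Proves.contract .hole (Proves.andR (hφs hΔ.1) (hψs hΔ.2))
  | or φ ψ ihφ ihψ =>
    obtain ⟨hφm, hφs⟩ := ihφ
    obtain ⟨hψm, hψs⟩ := ihψ
    refine ⟨mem_clB.2 fun χ h => Proves.orL .hole (h (Or.inl hφm))
      (h (Or.inr hψm)), clB_min ?_⟩
    rintro Δ (h | h)
    · exact Proves.orR1 (hφs h)
    · exact Proves.orR2 (hψs h)
  | imp φ ψ ihφ ihψ =>
    obtain ⟨hφm, hφs⟩ := ihφ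
    obtain ⟨hψm, hψs⟩ := ihψ
    have PCψ := semC_proofClosed ψ
    constructor
    · intro Δ' hΔ'
      have h0 : Bunch.semic .aempty (.frml ψ) ∈ semC ψ :=
        PCψ.equiv (BEquiv.trans (BEquiv.semicComm _ _) (BEquiv.semicUnit _)) hψm
      have h1 := PCψ.impL .hole (hφs hΔ') h0
      exact PCψ.equiv (BEquiv.trans (BEquiv.semicComm _ _)
        (BEquiv.ctx (.semicL .hole _) (BEquiv.symm (BEquiv.semicUnit Δ')))) h1
    · intro Δ hΔ
      exact Proves.impR (hψs (hΔ (.frml φ) hφm))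
  | sep φ ψ ihφ ihψ =>
    obtain ⟨hφm, hφs⟩ := ihφ
    obtain ⟨hψm, hψs⟩ := ihψ
    refine ⟨mem_clB.2 fun χ h => Proves.sepL .hole
      (h ⟨.frml φ, hφm, .frml ψ, hψm, rfl⟩), clB_min ?_⟩
    rintro Δ ⟨Δ₁, h₁, Δ₂, h₂, rfl⟩
    exact Proves.sepR (hφs h₁) (hψs h₂)
  | wand φ ψ ihφ ihψ =>
    obtain ⟨hφm, hφs⟩ := ihφ
    obtain ⟨hψm, hψs⟩ := ihψ
    have PCψ := semC_proofClosed ψ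
    constructor
    · intro Δ' hΔ'
      have h0 : Bunch.comma .mempty (.frml ψ) ∈ semC ψ :=
        PCψ.equiv (BEquiv.trans (BEquiv.commaComm _ _) (BEquiv.commaUnit _)) hψm
      have h1 := PCψ.wandL .hole (hφs hΔ') h0
      exact PCψ.equiv (BEquiv.trans (BEquiv.commaComm _ _)
        (BEquiv.ctx (.commaL .hole _) (BEquiv.symm (BEquiv.commaUnit Δ')))) h1
    · intro Δ hΔ
      exact Proves.wandR (hψs (hΔ (.frml φ) hφm))
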